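/- arXiv:2307.13713 — 7 statements merged into one kernel-verified Lean document; each statement's English description precedes it below -/
import Mathlib

section
/- If ρ ≠ 1, then the set of fixed points of the update function f on [0,1] is exactly {0, 1/2, 1}, i.e. for x ∈ [0,1] one has f(x) = x if and only if x ∈ {0, 1/2, 1}. -/
/-- If `ρ ≠ 1`, the set of fixed points of the update function `f` on `[0,1]` is exactly
`{0, 1/2, 1}`. -/
theorem stmt_2 (a b α β lam : ℝ) (ha : 0 < a) (hb : 0 < b) (hα : 0 < α) (hβ : 0 < β)
    (hlam : 0 < lam) (Γ f : ℝ → ℝ)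
    (hΓ : ∀ x ∈ Set.Icc (0:ℝ) 1, Γ x =
      (a * α * x ^ 2 + b * β * x * (1 - x)) /
        (a * α * x ^ 2 + 2 * b * β * x * (1 - x) + a * α * (1 - x) ^ 2))
    (hf : ∀ x ∈ Set.Icc (0:ℝ) 1, f x = (x + lam * Γ x) / (1 + lam))
    (ρ : ℝ) (hρ : ρ = a * α / (b * β)) (hρ1 : ρ ≠ 1) :
    ∀ x ∈ Set.Icc (0:ℝ) 1, (f x = x ↔ x = 0 ∨ x = 1 / 2 ∨ x = 1) := by
  have hbβ : 0 < b * β := mul_pos hb hβ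
  have haα : 0 < a * α := mul_pos ha hα
  have hcd : a * α - b * β ≠ 0 := by
    intro h
    apply hρ1
    rw [hρ]
    field_simp
    linarith
  intro x hx
  obtain ⟨hx0, hx1⟩ := hx
  have hD : 0 < a * α * x ^ 2 + 2 * b * β * x * (1 - x) + a * α * (1 - x) ^ 2 := by
    nlinarith [sq_nonneg (2*x - 1), mul_nonneg hx0 (by linarith : (0:ℝ) ≤ 1 - x)]
  have hDne := ne_of_gt hD
  have hlne : (1 : ℝ) + lam ≠ 0 := by positivity
  rw [hf x ⟨hx0, hx1⟩, hΓ x ⟨hx0, hx1⟩]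
  constructor
  · intro h
    have h' : x * (1 - x) * (2 * x - 1) * (a * α - b * β) = 0 := by
      rw [div_eq_iff hlne] at h
      have h2 : lam * ((a * α * x ^ 2 + b * β * x * (1 - x)) /
          (a * α * x ^ 2 + 2 * b * β * x * (1 - x) + a * α * (1 - x) ^ 2) - x) = 0 := by linarith
      have h3 := (mul_eq_zero.mp h2).resolve_left hlam.ne'
      rw [sub_eq_zero, div_eq_iff hDne] at h3
      linear_combination h3
    rcases mul_eq_zero.mp h' with h'' | h''
    · rcases mul_eq_zero.mp h'' with h3 | h3
      · rcases mul_eq_zero.mp h3 with h4 | h4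
        · exact Or.inl h4
        · exact Or.inr (Or.inr (by linarith))
      · exact Or.inr (Or.inl (by linarith))
    · exact absurd h'' hcd
  · rintro (rfl | rfl | rfl) <;> field_simp <;> ring
end

section
/- If ρ > 1, then f(x) < x for every x in the open interval (0, 1/2). -/
/-- comparison of  with  on the open interval . -/
theorem stmt_4 (a b α β lam : ℝ) (ha : 0 < a) (hb : 0 < b) (hα : 0 < α) (hβ : 0 < β)
    (hlam : 0 < lam) (Γ f : ℝ → ℝ)
    (hΓ : ∀ x ∈ Set.Icc (0:ℝ) 1, Γ x =
      (a * α * x ^ 2 + b * β * x * (1 - x)) /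
        (a * α * x ^ 2 + 2 * b * β * x * (1 - x) + a * α * (1 - x) ^ 2))
    (hf : ∀ x ∈ Set.Icc (0:ℝ) 1, f x = (x + lam * Γ x) / (1 + lam))
    (ρ : ℝ) (hρ : ρ = a * α / (b * β)) (hρ1 : (1 : ℝ) < ρ) :
    ∀ x ∈ Set.Ioo (0:ℝ) (1 / 2), f x < x := by
  intro x hx
  obtain ⟨hx0, hx2⟩ := hx
  have hx1 : x < 1 := by linarith
  have hxm : x ∈ Set.Icc (0:ℝ) 1 := ⟨le_of_lt hx0, le_of_lt hx1⟩
  have hB : 0 < b * β := mul_pos hb hβ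
  have hA : 0 < a * α := mul_pos ha hα
  have hBA : b * β < a * α := by
    rw [hρ, lt_div_iff₀ hB] at hρ1; linarith
  have hD : 0 < a * α * x ^ 2 + 2 * b * β * x * (1 - x) + a * α * (1 - x) ^ 2 := by
    have h1x : 0 < 1 - x := by linarith
    positivity
  have hΓx : Γ x < x := by
    rw [hΓ x hxm, div_lt_iff₀ hD]
    nlinarith [mul_pos (mul_pos hx0 (by linarith : (0:ℝ) < 1 - x)) (by linarith : (0:ℝ) < 1 - 2*x), sub_pos.mpr hBA]
  rw [hf x hxm, div_lt_iff₀ (by linarith : (0:ℝ) < 1 + lam)]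
  nlinarith
end

section
/- If ρ < 1, then f(x) > x for every x in the open interval (0, 1/2). -/
/-- comparison of  with  on the open interval . -/
theorem stmt_5 (a b α β lam : ℝ) (ha : 0 < a) (hb : 0 < b) (hα : 0 < α) (hβ : 0 < β)
    (hlam : 0 < lam) (Γ f : ℝ → ℝ)
    (hΓ : ∀ x ∈ Set.Icc (0:ℝ) 1, Γ x =
      (a * α * x ^ 2 + b * β * x * (1 - x)) /
        (a * α * x ^ 2 + 2 * b * β * x * (1 - x) + a * α * (1 - x) ^ 2))
    (hf : ∀ x ∈ Set.Icc (0:ℝ) 1, f x = (x + lam * Γ x) / (1 + lam))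
    (ρ : ℝ) (hρ : ρ = a * α / (b * β)) (hρ1 : ρ < (1 : ℝ)) :
    ∀ x ∈ Set.Ioo (0:ℝ) (1 / 2), x < f x := by
  intro x hx
  obtain ⟨hx0, hx2⟩ := hx
  have hx1 : x < 1 := by linarith
  have hmem : x ∈ Set.Icc (0:ℝ) 1 := ⟨le_of_lt hx0, le_of_lt hx1⟩
  have hab : a * α < b * β := by
    have hbβ : 0 < b * β := by positivity
    rw [hρ, div_lt_one hbβ] at hρ1
    exact hρ1
  have h1x : 0 < 1 - x := by linarith
  have hD : 0 < a * α * x ^ 2 + 2 * b * β * x * (1 - x) + a * α * (1 - x) ^ 2 := by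
    positivity
  have hΓx : x < Γ x := by
    rw [hΓ x hmem, lt_div_iff₀ hD]
    nlinarith [mul_pos hx0 h1x, mul_pos (mul_pos hx0 h1x) (sub_pos.mpr hab),
      mul_pos (mul_pos (mul_pos hx0 h1x) (sub_pos.mpr hab)) (by linarith : (0:ℝ) < 1 - 2 * x)]
  rw [hf x hmem, lt_div_iff₀ (by linarith : (0:ℝ) < 1 + lam)]
  nlinarith [mul_pos hlam (sub_pos.mpr hΓx)]
end

section
/- If ρ < 1, then f(x) ≤ 1/2 for every x ∈ [0, 1/2]; that is, the minority can never become the majority under the deterministic dynamics. -/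
/-- If `ρ < 1`, then `f(x) ≤ 1/2` for every `x ∈ [0, 1/2]`: the minority can never become
the majority under the deterministic dynamics. -/
theorem stmt_6 (a b α β lam : ℝ) (ha : 0 < a) (hb : 0 < b) (hα : 0 < α) (hβ : 0 < β)
    (hlam : 0 < lam) (Γ f : ℝ → ℝ)
    (hΓ : ∀ x ∈ Set.Icc (0:ℝ) 1, Γ x =
      (a * α * x ^ 2 + b * β * x * (1 - x)) /
        (a * α * x ^ 2 + 2 * b * β * x * (1 - x) + a * α * (1 - x) ^ 2))
    (hf : ∀ x ∈ Set.Icc (0:ℝ) 1, f x = (x + lam * Γ x) / (1 + lam))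
    (ρ : ℝ) (hρ : ρ = a * α / (b * β)) (hρ1 : ρ < 1) :
    ∀ x ∈ Set.Icc (0:ℝ) (1 / 2), f x ≤ 1 / 2 := by
  intro x hx
  obtain ⟨hx0, hx2⟩ := hx
  have hx1 : x ∈ Set.Icc (0:ℝ) 1 := ⟨hx0, by linarith⟩
  have hD : 0 < a * α * x ^ 2 + 2 * b * β * x * (1 - x) + a * α * (1 - x) ^ 2 := by
    have h1x : (0:ℝ) < 1 - x := by linarith
    have h1 : 0 < a * α * (1 - x) ^ 2 := by positivity
    have h2 : 0 ≤ a * α * x ^ 2 := by positivity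
    have h3 : 0 ≤ 2 * b * β * x * (1 - x) := by
      have : 0 ≤ 1 - x := by linarith
      positivity
    linarith
  have hΓle : Γ x ≤ 1 / 2 := by
    rw [hΓ x hx1, div_le_iff₀ hD]
    nlinarith [mul_pos ha hα, sq_nonneg x]
  rw [hf x hx1, div_le_iff₀ (by linarith : (0:ℝ) < 1 + lam)]
  nlinarith
end

section
/- Suppose ρ < 1. Then for any initial value Φ_0 ∈ (0, 1/2], the sequence defined by Φ_t = f(Φ_{t−1}) is monotonically increasing, remains in (0, 1/2], and converges to 1/2 as t → ∞. -/
open Filter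


set_option maxHeartbeats 1000000 in
/-- If `ρ < 1`, then for any initial value `Φ 0 ∈ (0, 1/2]`, the sequence defined by
`Φ (t+1) = f (Φ t)` is monotonically increasing, remains in `(0, 1/2]`, and converges
to `1/2`. -/
theorem stmt_8 (a b α β lam : ℝ) (ha : 0 < a) (hb : 0 < b) (hα : 0 < α) (hβ : 0 < β)
    (hlam : 0 < lam) (Γ f : ℝ → ℝ)
    (hΓ : ∀ x ∈ Set.Icc (0:ℝ) 1, Γ x =
      (a * α * x ^ 2 + b * β * x * (1 - x)) /
        (a * α * x ^ 2 + 2 * b * β * x * (1 - x) + a * α * (1 - x) ^ 2))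
    (hf : ∀ x ∈ Set.Icc (0:ℝ) 1, f x = (x + lam * Γ x) / (1 + lam))
    (ρ : ℝ) (hρ : ρ = a * α / (b * β)) (hρ1 : ρ < 1)
    (Φ : ℕ → ℝ) (hΦ0 : Φ 0 ∈ Set.Ioc (0:ℝ) (1 / 2))
    (hrec : ∀ t : ℕ, Φ (t + 1) = f (Φ t)) :
    Monotone Φ ∧ (∀ t : ℕ, Φ t ∈ Set.Ioc (0:ℝ) (1 / 2)) ∧
      Filter.Tendsto Φ Filter.atTop (nhds (1 / 2)) := by
  have hApos : 0 < a * α := mul_pos ha hα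
  have hBpos : 0 < b * β := mul_pos hb hβ
  have hAB : a * α < b * β := by
    rw [hρ, div_lt_one hBpos] at hρ1; exact hρ1
  have h1lam : (0:ℝ) < 1 + lam := by linarith
  -- key step lemma
  have key : ∀ x ∈ Set.Ioc (0:ℝ) (1/2), f x ∈ Set.Ioc (0:ℝ) (1/2) ∧ x ≤ f x := by
    rintro x ⟨hx0, hx2⟩
    have h1x : (0:ℝ) ≤ 1 - x := by linarith
    have h12x : (0:ℝ) ≤ 1 - 2*x := by linarith
    have hx1 : x ∈ Set.Icc (0:ℝ) 1 := ⟨hx0.le, by linarith⟩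
    have hD : 0 < a * α * x ^ 2 + 2 * b * β * x * (1 - x) + a * α * (1 - x) ^ 2 := by
      nlinarith [sq_nonneg x, sq_nonneg (1-x), mul_nonneg hx0.le h1x]
    have hΓx := hΓ x hx1
    have hfx := hf x hx1
    have hΓ0 : 0 ≤ Γ x := by
      rw [hΓx]
      apply div_nonneg _ hD.le
      nlinarith [mul_nonneg hx0.le h1x, sq_nonneg x]
    have hΓge : x ≤ Γ x := by
      rw [hΓx, le_div_iff₀ hD]
      nlinarith [mul_nonneg (mul_nonneg (mul_nonneg hx0.le h1x) h12x) (by linarith : (0:ℝ) ≤ b*β - a*α)]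
    have hΓle : Γ x ≤ 1/2 := by
      rw [hΓx, div_le_iff₀ hD]
      nlinarith [mul_nonneg hApos.le h12x]
    refine ⟨⟨?_, ?_⟩, ?_⟩
    · rw [hfx]
      apply div_pos _ h1lam
      nlinarith [mul_nonneg hlam.le hΓ0]
    · rw [hfx, div_le_iff₀ h1lam]
      nlinarith [mul_le_mul_of_nonneg_left hΓle hlam.le]
    · rw [hfx, le_div_iff₀ h1lam]
      nlinarith [mul_le_mul_of_nonneg_left hΓge hlam.le]
  have hmem : ∀ t, Φ t ∈ Set.Ioc (0:ℝ) (1/2) := by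
    intro t
    induction t with
    | zero => exact hΦ0
    | succ n ih => rw [hrec]; exact (key _ ih).1
  have hmono : Monotone Φ := monotone_nat_of_le_succ fun t => by
    rw [hrec]; exact (key _ (hmem t)).2
  have hbdd : BddAbove (Set.range Φ) := ⟨1/2, by rintro y ⟨t, rfl⟩; exact (hmem t).2⟩
  obtain ⟨L, hLdef⟩ : ∃ L, L = ⨆ t, Φ t := ⟨_, rfl⟩
  have htend : Tendsto Φ atTop (nhds L) := by
    rw [hLdef]; exact tendsto_atTop_ciSup hmono hbdd
  have hL0 : 0 < L := lt_of_lt_of_le (hmem 0).1 (by rw [hLdef]; exact le_ciSup hbdd 0)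
  have hL2 : L ≤ 1/2 := by rw [hLdef]; exact ciSup_le fun t => (hmem t).2
  have hDL : 0 < a * α * L ^ 2 + 2 * b * β * L * (1 - L) + a * α * (1 - L) ^ 2 := by
    nlinarith [mul_nonneg hL0.le (by linarith : (0:ℝ) ≤ 1 - L)]
  set F : ℝ → ℝ := fun x => (x + lam * ((a * α * x ^ 2 + b * β * x * (1 - x)) /
      (a * α * x ^ 2 + 2 * b * β * x * (1 - x) + a * α * (1 - x) ^ 2))) / (1 + lam) with hFdef
  have hcont : ContinuousAt F L := by
    apply ContinuousAt.div _ continuousAt_const (by linarith)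
    apply ContinuousAt.add continuousAt_id
    apply ContinuousAt.mul continuousAt_const
    exact ContinuousAt.div (by fun_prop) (by fun_prop) (ne_of_gt hDL)
  have hFΦ : ∀ t, Φ (t+1) = F (Φ t) := by
    intro t
    have hm := hmem t
    have hx1 : Φ t ∈ Set.Icc (0:ℝ) 1 := ⟨hm.1.le, by linarith [hm.2]⟩
    rw [hrec, hf _ hx1, hΓ _ hx1]
  have ht2 : Tendsto (fun t => Φ (t+1)) atTop (nhds L) :=
    htend.comp (tendsto_add_atTop_nat 1)
  have ht3 : Tendsto (fun t => F (Φ t)) atTop (nhds (F L)) := hcont.tendsto.comp htend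
  have hFL : F L = L := by
    apply tendsto_nhds_unique _ ht2
    simpa [← hFΦ] using ht3
  have hLeq : L = 1/2 := by
    by_contra hne
    have hlt : L < 1/2 := lt_of_le_of_ne hL2 hne
    simp only [hFdef] at hFL
    rw [div_eq_iff (ne_of_gt h1lam)] at hFL
    have hDne : a * α * L ^ 2 + 2 * b * β * L * (1 - L) + a * α * (1 - L) ^ 2 ≠ 0 := ne_of_gt hDL
    have hQ : (a * α * L ^ 2 + b * β * L * (1 - L)) /
        (a * α * L ^ 2 + 2 * b * β * L * (1 - L) + a * α * (1 - L) ^ 2) = L := by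
      have h3 : lam * ((a * α * L ^ 2 + b * β * L * (1 - L)) /
          (a * α * L ^ 2 + 2 * b * β * L * (1 - L) + a * α * (1 - L) ^ 2)) = lam * L := by
        linear_combination hFL
      exact mul_left_cancel₀ (ne_of_gt hlam) h3
    have hN : a * α * L ^ 2 + b * β * L * (1 - L) =
        L * (a * α * L ^ 2 + 2 * b * β * L * (1 - L) + a * α * (1 - L) ^ 2) :=
      (div_eq_iff hDne).mp hQ
    have hz : L * (1 - L) * (1 - 2*L) * (b*β - a*α) = 0 := by linear_combination hN
    have hpos : 0 < L * (1 - L) * (1 - 2*L) * (b*β - a*α) :=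
      mul_pos (mul_pos (mul_pos hL0
        (by linarith : (0:ℝ) < 1 - L)) (by linarith : (0:ℝ) < 1 - 2*L))
        (by linarith : (0:ℝ) < b*β - a*α)
    linarith
  refine ⟨hmono, hmem, ?_⟩
  rw [← hLeq]
  exact htend
end

section
/- The derivative of the update function f at the fixed points 0 and 1 equals f'(0) = f'(1) = (λ + ρ)/(λρ + ρ), and at the fixed point 1/2 it equals f'(1/2) = (2λρ + ρ + 1)/((1+λ)(ρ+1)). -/
lemma stmt_10_aux (A B lam x : ℝ)
    (hD : A * x ^ 2 + 2 * B * x * (1 - x) + A * (1 - x) ^ 2 ≠ 0) (hl : (1:ℝ) + lam ≠ 0) :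
    HasDerivAt (fun y => (y + lam * ((A * y ^ 2 + B * y * (1 - y)) /
        (A * y ^ 2 + 2 * B * y * (1 - y) + A * (1 - y) ^ 2))) / (1 + lam))
      ((1 + lam * (((2 * A * x + B * (1 - 2 * x)) *
          (A * x ^ 2 + 2 * B * x * (1 - x) + A * (1 - x) ^ 2) -
          (A * x ^ 2 + B * x * (1 - x)) *
          (2 * A * x + 2 * B * (1 - 2 * x) - 2 * A * (1 - x))) /
          (A * x ^ 2 + 2 * B * x * (1 - x) + A * (1 - x) ^ 2) ^ 2)) / (1 + lam)) x := by
  have hid : HasDerivAt (fun y : ℝ => y) 1 x := hasDerivAt_id x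
  have hsq : HasDerivAt (fun y : ℝ => y ^ 2) (2 * x) x := by
    simpa using hasDerivAt_pow 2 x
  have h1m : HasDerivAt (fun y : ℝ => 1 - y) (-1) x := by
    simpa using (hasDerivAt_const x (1:ℝ)).fun_sub hid
  have h1msq : HasDerivAt (fun y : ℝ => (1 - y) ^ 2) (2 * (1 - x) * (-1)) x := by
    simpa using (h1m.fun_pow 2)
  have hx1m : HasDerivAt (fun y : ℝ => y * (1 - y)) (1 * (1 - x) + x * (-1)) x :=
    hid.mul h1m
  have hN : HasDerivAt (fun y : ℝ => A * y ^ 2 + B * y * (1 - y))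
      (A * (2 * x) + B * (1 * (1 - x) + x * (-1))) x := by
    have := (hsq.const_mul A).fun_add (hx1m.const_mul B)
    simpa [mul_assoc] using this
  have hDd : HasDerivAt (fun y : ℝ => A * y ^ 2 + 2 * B * y * (1 - y) + A * (1 - y) ^ 2)
      (A * (2 * x) + 2 * B * (1 * (1 - x) + x * (-1)) + A * (2 * (1 - x) * (-1))) x := by
    have := ((hsq.const_mul A).fun_add (hx1m.const_mul (2 * B))).fun_add (h1msq.const_mul A)
    simpa [mul_assoc] using this
  have hq := hN.fun_div hDd hD
  have h := (hid.fun_add (hq.const_mul lam)).div_const (1 + lam)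
  refine h.congr_deriv ?_
  ring

/-- The derivative of the update function `f` at the fixed points `0` and `1` equals
`(λ + ρ)/(λρ + ρ)`, and at the fixed point `1/2` it equals
`(2λρ + ρ + 1)/((1+λ)(ρ+1))`. (Derivatives are taken within the domain `[0,1]`.) -/
theorem stmt_10 (a b α β lam : ℝ) (ha : 0 < a) (hb : 0 < b) (hα : 0 < α) (hβ : 0 < β)
    (hlam : 0 < lam) (Γ f : ℝ → ℝ)
    (hΓ : ∀ x ∈ Set.Icc (0:ℝ) 1, Γ x =
      (a * α * x ^ 2 + b * β * x * (1 - x)) /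
        (a * α * x ^ 2 + 2 * b * β * x * (1 - x) + a * α * (1 - x) ^ 2))
    (hf : ∀ x ∈ Set.Icc (0:ℝ) 1, f x = (x + lam * Γ x) / (1 + lam))
    (ρ : ℝ) (hρ : ρ = a * α / (b * β)) :
    derivWithin f (Set.Icc (0:ℝ) 1) 0 = (lam + ρ) / (lam * ρ + ρ) ∧
    derivWithin f (Set.Icc (0:ℝ) 1) 1 = (lam + ρ) / (lam * ρ + ρ) ∧
    derivWithin f (Set.Icc (0:ℝ) 1) (1 / 2) =
      (2 * lam * ρ + ρ + 1) / ((1 + lam) * (ρ + 1)) := by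
  have hA0 : 0 < a * α := mul_pos ha hα
  have hB0 : 0 < b * β := mul_pos hb hβ
  have hA : a * α ≠ 0 := hA0.ne'
  have hB : b * β ≠ 0 := hB0.ne'
  have hl : (1:ℝ) + lam ≠ 0 := by positivity
  have hud : UniqueDiffOn ℝ (Set.Icc (0:ℝ) 1) := uniqueDiffOn_Icc (by norm_num)
  have key : ∀ p ∈ Set.Icc (0:ℝ) 1,
      ∀ _ : a * α * p ^ 2 + 2 * (b * β) * p * (1 - p) + a * α * (1 - p) ^ 2 ≠ 0,
      derivWithin f (Set.Icc (0:ℝ) 1) p =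
        (1 + lam * (((2 * (a * α) * p + b * β * (1 - 2 * p)) *
          (a * α * p ^ 2 + 2 * (b * β) * p * (1 - p) + a * α * (1 - p) ^ 2) -
          (a * α * p ^ 2 + b * β * p * (1 - p)) *
          (2 * (a * α) * p + 2 * (b * β) * (1 - 2 * p) - 2 * (a * α) * (1 - p))) /
          (a * α * p ^ 2 + 2 * (b * β) * p * (1 - p) + a * α * (1 - p) ^ 2) ^ 2)) /
          (1 + lam) := by
    intro p hp hD
    have h := (stmt_10_aux (a * α) (b * β) lam p hD hl).hasDerivWithinAt
      (s := Set.Icc (0:ℝ) 1)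
    have h2 : HasDerivWithinAt f _ (Set.Icc (0:ℝ) 1) p :=
      h.congr (fun y hy => by rw [hf y hy, hΓ y hy]; ring)
        (by rw [hf p hp, hΓ p hp]; ring)
    exact h2.derivWithin (hud p hp)
  refine ⟨?_, ?_, ?_⟩
  · have h := key 0 (by norm_num) (by
      have : a * α * (0:ℝ) ^ 2 + 2 * (b * β) * 0 * (1 - 0) + a * α * (1 - 0:ℝ) ^ 2 = a * α := by
        ring
      rw [this]; exact hA)
    rw [h, hρ]
    field_simp
    ring
  · have h := key 1 (by norm_num) (by
      have : a * α * (1:ℝ) ^ 2 + 2 * (b * β) * 1 * (1 - 1) + a * α * (1 - 1:ℝ) ^ 2 = a * α := by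
        ring
      rw [this]; exact hA)
    rw [h, hρ]
    field_simp
    ring
  · have hD : a * α * (1/2:ℝ) ^ 2 + 2 * (b * β) * (1/2) * (1 - 1/2)
        + a * α * (1 - 1/2:ℝ) ^ 2 ≠ 0 := by
      have : a * α * (1/2:ℝ) ^ 2 + 2 * (b * β) * (1/2) * (1 - 1/2)
          + a * α * (1 - 1/2:ℝ) ^ 2 = a * α / 2 + b * β / 2 := by ring
      rw [this]; positivity
    have h := key (1/2) (by norm_num) hD
    rw [h, hρ]
    have hAB : a * α / 2 + b * β / 2 ≠ 0 := by positivity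
    field_simp
    ring
end

section
/- Let ε ∈ (0, 1/2). There exists a constant C depending only on ε, a, α, b, β such that the following holds for all n ≥ C. Let n_R, n_B be positive integers with n_R + n_B = n, n_R ≤ n_B, and n_R ≥ n^{1/2+ε}. On a probability space, let (Y_{ij})_{1 ≤ i ≤ j ≤ n} be independent Bernoulli random variables where Y_{ij} has success probability a/n if nodes i and j have the same color and b/n otherwise (the first n_R nodes are red and the rest blue). Define R := α·(sum of Y_{ij} over ordered red–red pairs) + β·(sum of Y_{ij} over ordered red–blue pairs) and B := α·(sum of Y_{ij} over ordered blue–blue pairs) + β·(sum of Y_{ij} over ordered red–blue pairs). Then with probability at least 1 − 8·exp(−C₁·n^ε), where C₁ = min{a/12, b/6}, it holds that (1 − n^{−ε/4})·E[R]/E[R+B] < R/(R+B) < (1 + n^{−ε/4})·E[R]/E[R+B]. -/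
open MeasureTheory ProbabilityTheory Real Finset
set_option linter.unusedSectionVars false
set_option linter.unusedVariables false
set_option maxHeartbeats 2000000

set_option linter.unusedSectionVars false
set_option maxHeartbeats 1000000

section helpers
variable {Ω : Type} [MeasurableSpace Ω] {μ : Measure Ω} [IsProbabilityMeasure μ]

lemma bern_eq_indicator {X : Ω → ℝ} (h01 : ∀ ω, X ω = 0 ∨ X ω = 1) :
    X = Set.indicator {ω | X ω = 1} (fun _ => (1:ℝ)) := by
  funext ω
  rcases h01 ω with h | h <;> simp [Set.indicator_apply, h]

lemma bern_measurableSet {X : Ω → ℝ} (hX : Measurable X) :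
    MeasurableSet {ω | X ω = 1} := hX (measurableSet_singleton 1)

lemma bern_integrable {X : Ω → ℝ} (hX : Measurable X) (h01 : ∀ ω, X ω = 0 ∨ X ω = 1) :
    Integrable X μ := by
  rw [bern_eq_indicator h01]
  exact (integrable_const (1:ℝ)).indicator (bern_measurableSet hX)

lemma bern_integral {X : Ω → ℝ} (hX : Measurable X) (h01 : ∀ ω, X ω = 0 ∨ X ω = 1)
    {p : ℝ} (hp0 : 0 ≤ p) (hp : μ {ω | X ω = 1} = ENNReal.ofReal p) :
    ∫ ω, X ω ∂μ = p := by
  conv_lhs => rw [bern_eq_indicator h01]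
  rw [MeasureTheory.integral_indicator_const (1:ℝ) (bern_measurableSet hX), measureReal_def, hp,
    ENNReal.toReal_ofReal hp0]
  simp

lemma bern_exp_eq {X : Ω → ℝ} (h01 : ∀ ω, X ω = 0 ∨ X ω = 1) (u : ℝ) (ω : Ω) :
    Real.exp (u * X ω) = 1 + (Real.exp u - 1) * X ω := by
  rcases h01 ω with h | h <;> simp [h]

lemma bern_mgf {X : Ω → ℝ} (hX : Measurable X) (h01 : ∀ ω, X ω = 0 ∨ X ω = 1)
    {p : ℝ} (hp0 : 0 ≤ p) (hp : μ {ω | X ω = 1} = ENNReal.ofReal p) (u : ℝ) :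
    mgf X μ u = 1 + (Real.exp u - 1) * p := by
  have h : (fun ω => Real.exp (u * X ω)) = fun ω => 1 + (Real.exp u - 1) * X ω := by
    funext ω; exact bern_exp_eq h01 u ω
  rw [mgf, h]
  rw [integral_add (integrable_const 1) ((bern_integrable hX h01).const_mul _),
    integral_const, MeasureTheory.integral_const_mul, bern_integral hX h01 hp0 hp]
  simp

lemma bern_exp_integrable {X : Ω → ℝ} (hX : Measurable X) (h01 : ∀ ω, X ω = 0 ∨ X ω = 1)
    (u : ℝ) : Integrable (fun ω => Real.exp (u * X ω)) μ := by
  have h : (fun ω => Real.exp (u * X ω)) = fun ω => 1 + (Real.exp u - 1) * X ω := by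
    funext ω; exact bern_exp_eq h01 u ω
  rw [h]
  exact (integrable_const 1).add ((bern_integrable hX h01).const_mul _)

lemma chernoff {ι : Type} (X : ι → Ω → ℝ) (s : Finset ι)
    (hind : iIndepFun X μ) (hmeas : ∀ k, Measurable (X k))
    (h01 : ∀ k ω, X k ω = 0 ∨ X k ω = 1) (c : ι → ℝ) (hc : ∀ k, c k = 1 ∨ c k = 2)
    (p : ι → ℝ) (hp0 : ∀ k, 0 ≤ p k) (hp1 : ∀ k, p k ≤ 1)
    (hP : ∀ k, μ {ω | X k ω = 1} = ENNReal.ofReal (p k))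
    (δ : ℝ) (hδ0 : 0 < δ) (hδ1 : δ ≤ 1) :
    (μ {ω | δ * (∑ k ∈ s, c k * p k) ≤ |(∑ k ∈ s, c k * X k ω) - ∑ k ∈ s, c k * p k|}).toReal
      ≤ 2 * Real.exp (-δ^2 * (∑ k ∈ s, c k * p k) / 8) := by
  classical
  set m : ℝ := ∑ k ∈ s, c k * p k with hm
  have hck : ∀ k, (1:ℝ) ≤ c k ∧ c k ≤ 2 := by
    intro k; rcases hc k with h | h <;> rw [h] <;> norm_num
  have hm0 : 0 ≤ m := Finset.sum_nonneg fun k _ =>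
    mul_nonneg (le_trans zero_le_one (hck k).1) (hp0 k)
  -- the scaled family
  set Z : ι → Ω → ℝ := fun k ω => c k * X k ω with hZ
  have hindZ : iIndepFun Z μ :=
    hind.comp (fun k x => c k * x) (fun k => measurable_const_mul _)
  have hmeasZ : ∀ k, Measurable (Z k) := fun k => (hmeas k).const_mul _
  have hZeq : ∀ t k, (fun ω => Real.exp (t * Z k ω)) = fun ω => Real.exp ((t * c k) * X k ω) := by
    intro t k; funext ω; rw [hZ]; ring_nf
  have hintZ : ∀ t k, Integrable (fun ω => Real.exp (t * Z k ω)) μ := by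
    intro t k; rw [hZeq]; exact bern_exp_integrable (hmeas k) (h01 k) _
  -- mgf bound
  have hmgf : ∀ t : ℝ, mgf (∑ k ∈ s, Z k) μ t ≤ Real.exp ((Real.exp (2*t) - 1) / 2 * m) := by
    intro t
    rw [hindZ.mgf_sum hmeasZ s]
    have hfac : ∀ k ∈ s, mgf (Z k) μ t ≤ Real.exp (c k * p k * ((Real.exp (2*t) - 1) / 2)) := by
      intro k _
      have h1 : mgf (Z k) μ t = 1 + (Real.exp (t * c k) - 1) * p k := by
        rw [mgf, hZeq t k]
        exact bern_mgf (hmeas k) (h01 k) (hp0 k) (hP k) _ ▸ rfl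
      rw [h1]
      have h2 : (Real.exp (t * c k) - 1) * p k ≤ c k * p k * ((Real.exp (2*t) - 1) / 2) := by
        have he : Real.exp (2*t) = Real.exp t * Real.exp t := by
          rw [← Real.exp_add]; ring_nf
        rcases hc k with h | h <;> rw [h]
        · have hb : Real.exp t - 1 ≤ (Real.exp (2*t) - 1) / 2 := by
            nlinarith [sq_nonneg (Real.exp t - 1)]
          calc (Real.exp (t * 1) - 1) * p k = p k * (Real.exp t - 1) := by ring_nf
            _ ≤ p k * ((Real.exp (2*t) - 1) / 2) :=
                mul_le_mul_of_nonneg_left hb (hp0 k)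
            _ = 1 * p k * ((Real.exp (2*t) - 1) / 2) := by ring
        · rw [mul_comm t 2]; ring_nf; exact le_rfl
      calc 1 + (Real.exp (t * c k) - 1) * p k
          ≤ Real.exp ((Real.exp (t * c k) - 1) * p k) := by
            linarith [Real.add_one_le_exp ((Real.exp (t * c k) - 1) * p k)]
        _ ≤ Real.exp (c k * p k * ((Real.exp (2*t) - 1) / 2)) := Real.exp_le_exp.mpr h2
    calc ∏ k ∈ s, mgf (Z k) μ t
        ≤ ∏ k ∈ s, Real.exp (c k * p k * ((Real.exp (2*t) - 1) / 2)) := by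
          refine Finset.prod_le_prod (fun k _ => mgf_nonneg) hfac
      _ = Real.exp (∑ k ∈ s, c k * p k * ((Real.exp (2*t) - 1) / 2)) := by
          rw [Real.exp_sum]
      _ = Real.exp ((Real.exp (2*t) - 1) / 2 * m) := by
          rw [← Finset.sum_mul, hm]; ring_nf
  -- upper tail
  have hSapp : ∀ ω, (∑ k ∈ s, Z k) ω = ∑ k ∈ s, c k * X k ω := by
    intro ω; rw [Finset.sum_apply]
  have hub : (μ {ω | (1+δ)*m ≤ ∑ k ∈ s, c k * X k ω}).toReal
      ≤ Real.exp (-δ^2 * m / 8) := by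
    have h := measure_ge_le_exp_mul_mgf (μ := μ) (X := ∑ k ∈ s, Z k) (t := δ/4) ((1+δ)*m)
      (by positivity) (hindZ.integrable_exp_mul_sum hmeasZ (fun k _ => hintZ _ k))
    have hset : {ω | (1+δ)*m ≤ (∑ k ∈ s, Z k) ω} = {ω | (1+δ)*m ≤ ∑ k ∈ s, c k * X k ω} := by
      ext ω; rw [Set.mem_setOf_eq, Set.mem_setOf_eq, hSapp]
    rw [hset] at h
    refine h.trans ?_
    have hmg := hmgf (δ/4)
    calc Real.exp (-(δ/4) * ((1+δ)*m)) * mgf (∑ k ∈ s, Z k) μ (δ/4)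
        ≤ Real.exp (-(δ/4) * ((1+δ)*m)) * Real.exp ((Real.exp (2*(δ/4)) - 1) / 2 * m) :=
          mul_le_mul_of_nonneg_left hmg (Real.exp_pos _).le
      _ = Real.exp (((Real.exp (δ/2) - 1) / 2 - (δ/4) * (1+δ)) * m) := by
          rw [← Real.exp_add]; ring_nf
      _ ≤ Real.exp (-δ^2 * m / 8) := by
          apply Real.exp_le_exp.mpr
          have habs : |Real.exp (δ/2) - 1 - (δ/2)| ≤ (δ/2)^2 :=
            Real.abs_exp_sub_one_sub_id_le (by rw [abs_of_nonneg (by linarith)]; linarith)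
          have hkey : (Real.exp (δ/2) - 1) / 2 - (δ/4) * (1+δ) ≤ -δ^2/8 := by
            have := abs_le.mp habs
            nlinarith [this.2]
          calc ((Real.exp (δ/2) - 1) / 2 - (δ/4) * (1+δ)) * m ≤ (-δ^2/8) * m :=
              mul_le_mul_of_nonneg_right hkey hm0
            _ = -δ^2 * m / 8 := by ring
  -- lower tail
  have hlb : (μ {ω | ∑ k ∈ s, c k * X k ω ≤ (1-δ)*m}).toReal
      ≤ Real.exp (-δ^2 * m / 8) := by
    have h := measure_le_le_exp_mul_mgf (μ := μ) (X := ∑ k ∈ s, Z k) (t := -(δ/4)) ((1-δ)*m)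
      (by linarith) (hindZ.integrable_exp_mul_sum hmeasZ (fun k _ => hintZ _ k))
    have hset : {ω | (∑ k ∈ s, Z k) ω ≤ (1-δ)*m} = {ω | ∑ k ∈ s, c k * X k ω ≤ (1-δ)*m} := by
      ext ω; rw [Set.mem_setOf_eq, Set.mem_setOf_eq, hSapp]
    rw [hset] at h
    refine h.trans ?_
    have hmg := hmgf (-(δ/4))
    calc Real.exp (-(-(δ/4)) * ((1-δ)*m)) * mgf (∑ k ∈ s, Z k) μ (-(δ/4))
        ≤ Real.exp ((δ/4) * ((1-δ)*m)) * Real.exp ((Real.exp (2*(-(δ/4))) - 1) / 2 * m) := by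
          rw [neg_neg]
          exact mul_le_mul_of_nonneg_left hmg (Real.exp_pos _).le
      _ = Real.exp (((Real.exp (-(δ/2)) - 1) / 2 + (δ/4) * (1-δ)) * m) := by
          rw [← Real.exp_add]; ring_nf
      _ ≤ Real.exp (-δ^2 * m / 8) := by
          apply Real.exp_le_exp.mpr
          have habs : |Real.exp (-(δ/2)) - 1 - (-(δ/2))| ≤ (-(δ/2))^2 :=
            Real.abs_exp_sub_one_sub_id_le (by rw [abs_of_nonpos (by linarith)]; linarith)
          have hkey : (Real.exp (-(δ/2)) - 1) / 2 + (δ/4) * (1-δ) ≤ -δ^2/8 := by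
            have := abs_le.mp habs
            nlinarith [this.2]
          calc ((Real.exp (-(δ/2)) - 1) / 2 + (δ/4) * (1-δ)) * m ≤ (-δ^2/8) * m :=
              mul_le_mul_of_nonneg_right hkey hm0
            _ = -δ^2 * m / 8 := by ring
  -- union bound
  have hsub : {ω | δ * m ≤ |(∑ k ∈ s, c k * X k ω) - m|} ⊆
      {ω | (1+δ)*m ≤ ∑ k ∈ s, c k * X k ω} ∪ {ω | ∑ k ∈ s, c k * X k ω ≤ (1-δ)*m} := by
    intro ω hω
    rw [Set.mem_setOf_eq] at hω
    rcases abs_cases ((∑ k ∈ s, c k * X k ω) - m) with ⟨he, _⟩ | ⟨he, _⟩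
    · left; rw [Set.mem_setOf_eq]; rw [he] at hω; linarith
    · right; rw [Set.mem_setOf_eq]; rw [he] at hω; linarith
  calc (μ {ω | δ * m ≤ |(∑ k ∈ s, c k * X k ω) - m|}).toReal
      ≤ (μ ({ω | (1+δ)*m ≤ ∑ k ∈ s, c k * X k ω}
          ∪ {ω | ∑ k ∈ s, c k * X k ω ≤ (1-δ)*m})).toReal := by
        apply ENNReal.toReal_mono (measure_ne_top _ _) (measure_mono hsub)
    _ ≤ (μ {ω | (1+δ)*m ≤ ∑ k ∈ s, c k * X k ω}).toReal
        + (μ {ω | ∑ k ∈ s, c k * X k ω ≤ (1-δ)*m}).toReal := by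
        rw [← ENNReal.toReal_add (measure_ne_top _ _) (measure_ne_top _ _)]
        exact ENNReal.toReal_mono (by finiteness) (measure_union_le _ _)
    _ ≤ 2 * Real.exp (-δ^2 * m / 8) := by linarith
end helpers

lemma asym_sum {n : ℕ} (f : Fin n → Fin n → ℝ) (hf : ∀ i j : Fin n, ¬(i ≤ j) → f i j = 0) :
    ∑ i, ∑ j, f i j = ∑ p : {p : Fin n × Fin n // p.1 ≤ p.2}, f p.val.1 p.val.2 := by
  classical
  rw [← Fintype.sum_prod_type']
  rw [← Finset.sum_subtype (univ.filter (fun q : Fin n × Fin n => q.1 ≤ q.2))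
    (fun q => by simp) (fun q => f q.1 q.2)]
  symm
  apply Finset.sum_subset (Finset.filter_subset _ _)
  intro q _ hq
  simp only [mem_filter, mem_univ, true_and] at hq
  exact hf q.1 q.2 hq

lemma sym_sum {n : ℕ} (f : Fin n → Fin n → ℝ) (hf : ∀ i j, f i j = f j i) :
    ∑ i, ∑ j, f i j = ∑ p : {p : Fin n × Fin n // p.1 ≤ p.2},
      (if p.val.1 = p.val.2 then (1:ℝ) else 2) * f p.val.1 p.val.2 := by
  classical
  rw [← Finset.sum_subtype (univ.filter (fun q : Fin n × Fin n => q.1 ≤ q.2))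
    (fun q => by simp) (fun q => (if q.1 = q.2 then (1:ℝ) else 2) * f q.1 q.2)]
  rw [← Fintype.sum_prod_type']
  rw [← Finset.sum_filter_add_sum_filter_not univ (fun q : Fin n × Fin n => q.1 ≤ q.2)
    (fun q => f q.1 q.2)]
  have hswap : ∑ q ∈ univ.filter (fun q : Fin n × Fin n => ¬ q.1 ≤ q.2), f q.1 q.2
      = ∑ q ∈ univ.filter (fun q : Fin n × Fin n => q.1 < q.2), f q.1 q.2 := by
    apply Finset.sum_nbij' (fun q => Prod.swap q) (fun q => Prod.swap q)
    · intro q hq; simp only [mem_filter, mem_univ, true_and] at hq ⊢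
      exact lt_of_not_ge hq
    · intro q hq; simp only [mem_filter, mem_univ, true_and] at hq ⊢
      exact not_le_of_gt hq
    · intro q _; exact Prod.swap_swap q
    · intro q _; exact Prod.swap_swap q
    · intro q _; exact hf q.1 q.2
  rw [hswap]
  have hsplit : ∑ q ∈ univ.filter (fun q : Fin n × Fin n => q.1 ≤ q.2),
      (if q.1 = q.2 then (1:ℝ) else 2) * f q.1 q.2
      = ∑ q ∈ univ.filter (fun q : Fin n × Fin n => q.1 ≤ q.2), f q.1 q.2
        + ∑ q ∈ univ.filter (fun q : Fin n × Fin n => q.1 ≤ q.2),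
            (if q.1 = q.2 then (0:ℝ) else 1) * f q.1 q.2 := by
    rw [← Finset.sum_add_distrib]
    apply Finset.sum_congr rfl
    intro q _
    by_cases h : q.1 = q.2 <;> simp [h] <;> ring
  rw [hsplit]
  congr 1
  rw [Finset.sum_filter, Finset.sum_filter]
  apply Finset.sum_congr rfl
  intro q _
  by_cases h2 : q.1 = q.2
  · simp [h2]
  · by_cases h3 : q.1 < q.2
    · simp [h3, h3.le, h2]
    · have h1 : ¬ q.1 ≤ q.2 := fun h => h2 (le_antisymm h (le_of_not_gt h3))
      simp [h1, h3]

lemma count_red {n nR : ℕ} (h : nR ≤ n) :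
    ∑ i : Fin n, (if (i:ℕ) < nR then (1:ℝ) else 0) = nR := by
  rw [Fin.sum_univ_eq_sum_range (fun k => if k < nR then (1:ℝ) else 0)]
  rw [← Finset.sum_subset (Finset.range_subset_range.mpr h)
    (fun k _ hk => by rw [if_neg (by simpa using hk)])]
  rw [Finset.sum_congr rfl (fun k hk => if_pos (Finset.mem_range.mp hk))]
  simp

lemma count_blue {n nR : ℕ} (h : nR ≤ n) :
    ∑ i : Fin n, (if nR ≤ (i:ℕ) then (1:ℝ) else 0) = (n:ℝ) - nR := by
  have : ∀ i : Fin n, (if nR ≤ (i:ℕ) then (1:ℝ) else 0)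
      = 1 - (if (i:ℕ) < nR then (1:ℝ) else 0) := by
    intro i
    by_cases hi : (i:ℕ) < nR
    · rw [if_pos hi, if_neg (Nat.not_le.mpr hi)]; ring
    · rw [if_neg hi, if_pos (Nat.not_lt.mp hi)]; ring
  rw [Finset.sum_congr rfl (fun i _ => this i), Finset.sum_sub_distrib, count_red h]
  simp

lemma sum_ite_and {n : ℕ} (P Q : Fin n → Prop) [DecidablePred P] [DecidablePred Q] (x : ℝ) :
    ∑ i, ∑ j, (if P i ∧ Q j then x else 0)
      = (∑ i, if P i then (1:ℝ) else 0) * (∑ j, if Q j then (1:ℝ) else 0) * x := by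
  calc ∑ i, ∑ j, (if P i ∧ Q j then x else 0)
      = ∑ i, ∑ j, (if P i then (1:ℝ) else 0) * ((if Q j then (1:ℝ) else 0) * x) := by
        refine Finset.sum_congr rfl fun i _ => Finset.sum_congr rfl fun j _ => ?_
        by_cases hp : P i <;> by_cases hq : Q j <;> simp [hp, hq]
    _ = ∑ i, (if P i then (1:ℝ) else 0) * ((∑ j, if Q j then (1:ℝ) else 0) * x) := by
        refine Finset.sum_congr rfl fun i _ => ?_
        rw [← Finset.mul_sum, ← Finset.sum_mul]
    _ = (∑ i, if P i then (1:ℝ) else 0) * (∑ j, if Q j then (1:ℝ) else 0) * x := by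
        rw [← Finset.sum_mul]; ring

/-- Concentration of the red weight fraction in the weighted stochastic block model:
for `ε ∈ (0,1/2)` there is a constant `C = C(ε,a,α,b,β)` such that for all `n ≥ C`,
with `n_R` red and `n_B` blue nodes, `n_R ≤ n_B`, `n_R ≥ n^(1/2+ε)`, and independent
Bernoulli edge indicators `Y i j` (probability `a/n` for same-color pairs, `b/n` for
cross-color pairs), writing `R` and `B` for the total weighted degrees of the red and
blue communities, with probability at least `1 − 8·exp(−C₁·n^ε)` where
`C₁ = min (a/12) (b/6)`, the ratio `R/(R+B)` lies within a factor `1 ± n^(−ε/4)` of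
`E[R]/E[R+B]`. -/
theorem stmt_15 (a b α β ε : ℝ) (ha : 0 < a) (hb : 0 < b) (hα : 0 < α) (hβ : 0 < β)
    (hε : ε ∈ Set.Ioo (0:ℝ) (1 / 2)) :
    ∃ C : ℝ, ∀ n : ℕ, C ≤ (n : ℝ) →
      ∀ nR nB : ℕ, 0 < nR → 0 < nB → nR + nB = n → nR ≤ nB →
      (n : ℝ) ^ ((1:ℝ) / 2 + ε) ≤ (nR : ℝ) →
      a / n ≤ 1 → b / n ≤ 1 →
      ∀ (Ω : Type) (mΩ : MeasurableSpace Ω) (μ : Measure Ω), IsProbabilityMeasure μ →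
      ∀ Y : Fin n → Fin n → Ω → ℝ,
      (∀ i j, Y i j = Y j i) →
      (∀ i j, Measurable (Y i j)) →
      (∀ i j ω, Y i j ω = 0 ∨ Y i j ω = 1) →
      iIndepFun
        (fun p : {p : Fin n × Fin n // p.1 ≤ p.2} => Y p.val.1 p.val.2) μ →
      (∀ i j, μ {ω | Y i j ω = 1} =
        ENNReal.ofReal (if ((i : ℕ) < nR ↔ (j : ℕ) < nR) then a / n else b / n)) →
      ∀ R B : Ω → ℝ,
      (∀ ω, R ω =
        α * ∑ i : Fin n, ∑ j : Fin n, (if (i : ℕ) < nR ∧ (j : ℕ) < nR then Y i j ω else 0)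
          + β * ∑ i : Fin n, ∑ j : Fin n, (if (i : ℕ) < nR ∧ nR ≤ (j : ℕ) then Y i j ω else 0)) →
      (∀ ω, B ω =
        α * ∑ i : Fin n, ∑ j : Fin n, (if nR ≤ (i : ℕ) ∧ nR ≤ (j : ℕ) then Y i j ω else 0)
          + β * ∑ i : Fin n, ∑ j : Fin n, (if (i : ℕ) < nR ∧ nR ≤ (j : ℕ) then Y i j ω else 0)) →
      ENNReal.ofReal (1 - 8 * Real.exp (-(min (a / 12) (b / 6)) * (n : ℝ) ^ ε)) ≤
        μ {ω | (1 - (n : ℝ) ^ (-(ε / 4))) * ((∫ ω', R ω' ∂μ) / (∫ ω', (R ω' + B ω') ∂μ))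
                 < R ω / (R ω + B ω) ∧
               R ω / (R ω + B ω)
                 < (1 + (n : ℝ) ^ (-(ε / 4))) * ((∫ ω', R ω' ∂μ) / (∫ ω', (R ω' + B ω') ∂μ))} := by
  obtain ⟨hε0, hε2⟩ := hε
  classical
  set C₁ : ℝ := min (a/12) (b/6) with hC₁def
  have hC₁ : 0 < C₁ := lt_min (by linarith) (by linarith)
  set κ : ℝ := min (ε/2) (1/4) with hκdef
  have hκ : 0 < κ := lt_min (by linarith) (by norm_num)
  refine ⟨max 1 ((44:ℝ) ^ (κ⁻¹ : ℝ)), ?_⟩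
  intro n hn nR nB hnR0 hnB0 hsum hRBle hnRlb han hbn Ω mΩ μ hμ Y hsymY hmeasY h01Y hindep
    hPY R B hR hB
  have hn1 : (1:ℝ) ≤ n := le_trans (le_max_left _ _) hn
  have hN0 : (0:ℝ) < n := by linarith
  have hNκ : (44:ℝ) ≤ (n:ℝ) ^ κ := by
    have h1 : (44:ℝ) ^ (κ⁻¹:ℝ) ≤ (n:ℝ) := le_trans (le_max_right _ _) hn
    have h2 : ((44:ℝ) ^ (κ⁻¹:ℝ)) ^ κ ≤ ((n:ℝ)) ^ κ :=
      Real.rpow_le_rpow (Real.rpow_nonneg (by norm_num) _) h1 hκ.le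
    rwa [← Real.rpow_mul (by norm_num : (0:ℝ) ≤ 44), inv_mul_cancel₀ hκ.ne', Real.rpow_one] at h2
  have hpow : ∀ e : ℝ, κ ≤ e → (44:ℝ) ≤ (n:ℝ) ^ e := fun e he =>
    hNκ.trans (Real.rpow_le_rpow_of_exponent_le hn1 he)
  have h44a : (44:ℝ) ≤ (n:ℝ) ^ (ε/2) := hpow _ (min_le_left _ _)
  have h44b : (44:ℝ) ≤ (n:ℝ) ^ (1 - 3*ε/2) :=
    hpow _ (le_trans (min_le_right _ _) (by linarith))
  have h44c : (44:ℝ) ≤ (n:ℝ) ^ ((1:ℝ)/2 - ε/2) :=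
    hpow _ (le_trans (min_le_right _ _) (by linarith))
  have hrp : ∀ x y : ℝ, (n:ℝ)^x * (n:ℝ)^y = (n:ℝ)^(x+y) := fun x y =>
    (Real.rpow_add hN0 x y).symm
  have hrpos : ∀ x : ℝ, 0 < (n:ℝ)^x := fun x => Real.rpow_pos_of_pos hN0 x
  set η : ℝ := (n:ℝ) ^ (-(ε/4)) with hηdef
  have hη0 : 0 < η := hrpos _
  have hη1 : η ≤ 1 := Real.rpow_le_one_of_one_le_of_nonpos hn1 (by linarith)
  set δ : ℝ := η / 4 with hδdef
  have hδ0 : 0 < δ := by rw [hδdef]; linarith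
  have hδq : δ ≤ 1/4 := by rw [hδdef]; linarith
  have hδ1 : δ ≤ 1 := by linarith
  have hδ2 : δ^2 = (n:ℝ)^(-(ε/2)) / 16 := by
    have : η * η = (n:ℝ)^(-(ε/2)) := by rw [hηdef, hrp]; congr 1; ring
    rw [hδdef]; linear_combination this / 16
  -- cast facts
  have hnRn : nR ≤ n := by omega
  have hnBcast : ((n:ℝ)) - nR = nB := by
    have : (nR:ℝ) + nB = n := by exact_mod_cast congrArg (Nat.cast : ℕ → ℝ) hsum
    linarith
  have hnR1 : (1:ℝ) ≤ nR := by exact_mod_cast hnR0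
  have hnB2 : (n:ℝ)/2 ≤ nB := by
    have h1 : (nR:ℝ) ≤ nB := by exact_mod_cast hRBle
    linarith [hnBcast]
  -- the filtered index sets
  set sRR := Finset.univ.filter
    (fun p : {p : Fin n × Fin n // p.1 ≤ p.2} => (p.val.1:ℕ) < nR ∧ (p.val.2:ℕ) < nR)
    with hsRRdef
  set sRB := Finset.univ.filter
    (fun p : {p : Fin n × Fin n // p.1 ≤ p.2} => (p.val.1:ℕ) < nR ∧ nR ≤ (p.val.2:ℕ))
    with hsRBdef
  set sBB := Finset.univ.filter
    (fun p : {p : Fin n × Fin n // p.1 ≤ p.2} => nR ≤ (p.val.1:ℕ) ∧ nR ≤ (p.val.2:ℕ))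
    with hsBBdef
  -- reindexing identities
  have hRRid : ∀ g : Fin n → Fin n → ℝ, (∀ i j, g i j = g j i) →
      (∑ i : Fin n, ∑ j : Fin n, if (i:ℕ) < nR ∧ (j:ℕ) < nR then g i j else 0)
        = ∑ p ∈ sRR, (if p.val.1 = p.val.2 then (1:ℝ) else 2) * g p.val.1 p.val.2 := by
    intro g hg
    rw [sym_sum (fun i j => if (i:ℕ) < nR ∧ (j:ℕ) < nR then g i j else 0)
      (fun i j => by
        by_cases hi : (i:ℕ) < nR <;> by_cases hj : (j:ℕ) < nR <;> simp [hi, hj, hg i j])]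
    rw [hsRRdef, Finset.sum_filter]
    apply Finset.sum_congr rfl
    intro p _
    by_cases hcnd : (p.val.1:ℕ) < nR ∧ (p.val.2:ℕ) < nR
    · rw [if_pos hcnd, if_pos hcnd]
    · rw [if_neg hcnd, if_neg hcnd, mul_zero]
  have hBBid : ∀ g : Fin n → Fin n → ℝ, (∀ i j, g i j = g j i) →
      (∑ i : Fin n, ∑ j : Fin n, if nR ≤ (i:ℕ) ∧ nR ≤ (j:ℕ) then g i j else 0)
        = ∑ p ∈ sBB, (if p.val.1 = p.val.2 then (1:ℝ) else 2) * g p.val.1 p.val.2 := by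
    intro g hg
    rw [sym_sum (fun i j => if nR ≤ (i:ℕ) ∧ nR ≤ (j:ℕ) then g i j else 0)
      (fun i j => by
        by_cases hi : nR ≤ (i:ℕ) <;> by_cases hj : nR ≤ (j:ℕ) <;> simp [hi, hj, hg i j])]
    rw [hsBBdef, Finset.sum_filter]
    apply Finset.sum_congr rfl
    intro p _
    by_cases hcnd : nR ≤ (p.val.1:ℕ) ∧ nR ≤ (p.val.2:ℕ)
    · rw [if_pos hcnd, if_pos hcnd]
    · rw [if_neg hcnd, if_neg hcnd, mul_zero]
  have hRBid : ∀ g : Fin n → Fin n → ℝ,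
      (∑ i : Fin n, ∑ j : Fin n, if (i:ℕ) < nR ∧ nR ≤ (j:ℕ) then g i j else 0)
        = ∑ p ∈ sRB, (1:ℝ) * g p.val.1 p.val.2 := by
    intro g
    rw [asym_sum (fun i j => if (i:ℕ) < nR ∧ nR ≤ (j:ℕ) then g i j else 0)
      (fun i j hij => by
        show (if (i:ℕ) < nR ∧ nR ≤ (j:ℕ) then g i j else 0) = 0
        rw [if_neg]
        rintro ⟨h1, h2⟩
        exact hij (by rw [Fin.le_def]; omega))]
    rw [hsRBdef, Finset.sum_filter]
    apply Finset.sum_congr rfl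
    intro p _
    by_cases hcnd : (p.val.1:ℕ) < nR ∧ nR ≤ (p.val.2:ℕ)
    · rw [if_pos hcnd, if_pos hcnd, one_mul]
    · rw [if_neg hcnd, if_neg hcnd]
  -- the three sums and their means
  set T1 : Ω → ℝ := fun ω => ∑ p ∈ sRR,
    (if p.val.1 = p.val.2 then (1:ℝ) else 2) * Y p.val.1 p.val.2 ω with hT1def
  set T2 : Ω → ℝ := fun ω => ∑ p ∈ sRB, (1:ℝ) * Y p.val.1 p.val.2 ω with hT2def
  set T3 : Ω → ℝ := fun ω => ∑ p ∈ sBB,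
    (if p.val.1 = p.val.2 then (1:ℝ) else 2) * Y p.val.1 p.val.2 ω with hT3def
  set m1 : ℝ := ∑ p ∈ sRR, (if p.val.1 = p.val.2 then (1:ℝ) else 2) *
    (if ((p.val.1:ℕ) < nR ↔ (p.val.2:ℕ) < nR) then a/n else b/n) with hm1def
  set m2 : ℝ := ∑ p ∈ sRB, (1:ℝ) *
    (if ((p.val.1:ℕ) < nR ↔ (p.val.2:ℕ) < nR) then a/n else b/n) with hm2def
  set m3 : ℝ := ∑ p ∈ sBB, (if p.val.1 = p.val.2 then (1:ℝ) else 2) *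
    (if ((p.val.1:ℕ) < nR ↔ (p.val.2:ℕ) < nR) then a/n else b/n) with hm3def
  -- mean computations
  have hm1 : m1 = (nR:ℝ) * nR * (a/n) := by
    rw [hm1def]
    rw [Finset.sum_congr rfl (fun p hp => by
      simp only [hsRRdef, Finset.mem_filter] at hp
      rw [if_pos (iff_of_true hp.2.1 hp.2.2)] :
        ∀ p ∈ sRR, (if p.val.1 = p.val.2 then (1:ℝ) else 2) *
          (if ((p.val.1:ℕ) < nR ↔ (p.val.2:ℕ) < nR) then a/n else b/n)
          = (if p.val.1 = p.val.2 then (1:ℝ) else 2) * (a/n))]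
    rw [← hRRid (fun _ _ => a/(n:ℝ)) (fun _ _ => rfl)]
    rw [sum_ite_and (fun i : Fin n => (i:ℕ) < nR) (fun j : Fin n => (j:ℕ) < nR) (a/(n:ℝ)),
      count_red hnRn]
  have hm2 : m2 = (nR:ℝ) * nB * (b/n) := by
    rw [hm2def]
    rw [Finset.sum_congr rfl (fun p hp => by
      simp only [hsRBdef, Finset.mem_filter] at hp
      rw [if_neg (fun h => absurd (h.mp hp.2.1) (Nat.not_lt.mpr hp.2.2))] :
        ∀ p ∈ sRB, (1:ℝ) *
          (if ((p.val.1:ℕ) < nR ↔ (p.val.2:ℕ) < nR) then a/n else b/n)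
          = (1:ℝ) * (b/n))]
    rw [← hRBid (fun _ _ => b/(n:ℝ))]
    rw [sum_ite_and (fun i : Fin n => (i:ℕ) < nR) (fun j : Fin n => nR ≤ (j:ℕ)) (b/(n:ℝ)),
      count_red hnRn, count_blue hnRn, hnBcast]
  have hm3 : m3 = (nB:ℝ) * nB * (a/n) := by
    rw [hm3def]
    rw [Finset.sum_congr rfl (fun p hp => by
      simp only [hsBBdef, Finset.mem_filter] at hp
      rw [if_pos (iff_of_false (Nat.not_lt.mpr hp.2.1) (Nat.not_lt.mpr hp.2.2))] :
        ∀ p ∈ sBB, (if p.val.1 = p.val.2 then (1:ℝ) else 2) *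
          (if ((p.val.1:ℕ) < nR ↔ (p.val.2:ℕ) < nR) then a/n else b/n)
          = (if p.val.1 = p.val.2 then (1:ℝ) else 2) * (a/n))]
    rw [← hBBid (fun _ _ => a/(n:ℝ)) (fun _ _ => rfl)]
    rw [sum_ite_and (fun i : Fin n => nR ≤ (i:ℕ)) (fun j : Fin n => nR ≤ (j:ℕ)) (a/(n:ℝ)),
      count_blue hnRn, hnBcast]
  -- positivity of means
  have hm1pos : 0 < m1 := by
    rw [hm1]
    have h0 : (0:ℝ) < nR := by exact_mod_cast hnR0
    exact mul_pos (mul_pos h0 h0) (div_pos ha hN0)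
  have hm2pos : 0 < m2 := by
    rw [hm2]
    have h0 : (0:ℝ) < nR := by exact_mod_cast hnR0
    have h2 : (0:ℝ) < nB := by exact_mod_cast hnB0
    exact mul_pos (mul_pos h0 h2) (div_pos hb hN0)
  have hm3pos : 0 < m3 := by
    rw [hm3]
    have h2 : (0:ℝ) < nB := by exact_mod_cast hnB0
    exact mul_pos (mul_pos h2 h2) (div_pos ha hN0)
  -- integrability and expectations
  have hprnn : ∀ p : {p : Fin n × Fin n // p.1 ≤ p.2},
      0 ≤ (if ((p.val.1:ℕ) < nR ↔ (p.val.2:ℕ) < nR) then a/(n:ℝ) else b/n) := by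
    intro p; split
    · exact (div_pos ha hN0).le
    · exact (div_pos hb hN0).le
  have hpr1 : ∀ p : {p : Fin n × Fin n // p.1 ≤ p.2},
      (if ((p.val.1:ℕ) < nR ↔ (p.val.2:ℕ) < nR) then a/(n:ℝ) else b/n) ≤ 1 := by
    intro p; split
    · exact han
    · exact hbn
  have hYint : ∀ i j, Integrable (Y i j) μ := fun i j =>
    bern_integrable (hmeasY i j) (h01Y i j)
  have hT1int : Integrable T1 μ := by
    rw [hT1def]
    exact integrable_finset_sum _ (fun p _ => (hYint _ _).const_mul _)
  have hT2int : Integrable T2 μ := by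
    rw [hT2def]
    exact integrable_finset_sum _ (fun p _ => (hYint _ _).const_mul _)
  have hT3int : Integrable T3 μ := by
    rw [hT3def]
    exact integrable_finset_sum _ (fun p _ => (hYint _ _).const_mul _)
  have hT1E : ∫ ω, T1 ω ∂μ = m1 := by
    rw [hT1def, hm1def]
    rw [integral_finset_sum _ (fun p _ => (hYint _ _).const_mul _)]
    refine Finset.sum_congr rfl fun p _ => ?_
    rw [MeasureTheory.integral_const_mul,
      bern_integral (hmeasY _ _) (h01Y _ _) (hprnn p) (hPY _ _)]
  have hT2E : ∫ ω, T2 ω ∂μ = m2 := by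
    rw [hT2def, hm2def]
    rw [integral_finset_sum _ (fun p _ => (hYint _ _).const_mul _)]
    refine Finset.sum_congr rfl fun p _ => ?_
    rw [MeasureTheory.integral_const_mul,
      bern_integral (hmeasY _ _) (h01Y _ _) (hprnn p) (hPY _ _)]
  have hT3E : ∫ ω, T3 ω ∂μ = m3 := by
    rw [hT3def, hm3def]
    rw [integral_finset_sum _ (fun p _ => (hYint _ _).const_mul _)]
    refine Finset.sum_congr rfl fun p _ => ?_
    rw [MeasureTheory.integral_const_mul,
      bern_integral (hmeasY _ _) (h01Y _ _) (hprnn p) (hPY _ _)]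
  -- R and B in terms of T's
  have hRω : ∀ ω, R ω = α * T1 ω + β * T2 ω := by
    intro ω
    rw [hR ω, hRRid (fun i j => Y i j ω) (fun i j => by show Y i j ω = Y j i ω; rw [hsymY i j]),
      hRBid (fun i j => Y i j ω)]
  have hBω : ∀ ω, B ω = α * T3 ω + β * T2 ω := by
    intro ω
    rw [hB ω, hBBid (fun i j => Y i j ω) (fun i j => by show Y i j ω = Y j i ω; rw [hsymY i j]),
      hRBid (fun i j => Y i j ω)]
  have hRint : Integrable R μ :=
    (((hT1int.const_mul α).add (hT2int.const_mul β)).congr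
      (Filter.EventuallyEq.symm (Filter.Eventually.of_forall hRω)))
  have hBint : Integrable B μ :=
    (((hT3int.const_mul α).add (hT2int.const_mul β)).congr
      (Filter.EventuallyEq.symm (Filter.Eventually.of_forall hBω)))
  have hER : ∫ ω, R ω ∂μ = α * m1 + β * m2 := by
    rw [integral_congr_ae (Filter.Eventually.of_forall hRω),
      integral_add (hT1int.const_mul α) (hT2int.const_mul β),
      MeasureTheory.integral_const_mul, MeasureTheory.integral_const_mul, hT1E, hT2E]
  have hEB : ∫ ω, B ω ∂μ = α * m3 + β * m2 := by
    rw [integral_congr_ae (Filter.Eventually.of_forall hBω),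
      integral_add (hT3int.const_mul α) (hT2int.const_mul β),
      MeasureTheory.integral_const_mul, MeasureTheory.integral_const_mul, hT3E, hT2E]
  have hERB : ∫ ω, (R ω + B ω) ∂μ = (α * m1 + β * m2) + (α * m3 + β * m2) := by
    rw [integral_add hRint hBint, hER, hEB]
  -- lower bounds on means
  have hm1lb : a * (n:ℝ)^(2*ε) ≤ m1 := by
    rw [hm1]
    have h1 : (n:ℝ)^((1:ℝ)/2+ε) * (n:ℝ)^((1:ℝ)/2+ε) ≤ (nR:ℝ) * nR :=
      mul_le_mul hnRlb hnRlb (hrpos _).le (by positivity)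
    have h2 : (n:ℝ)^((1:ℝ)/2+ε) * (n:ℝ)^((1:ℝ)/2+ε) = (n:ℝ) * (n:ℝ)^(2*ε) := by
      rw [hrp, show ((1:ℝ)/2+ε)+((1:ℝ)/2+ε) = 1 + 2*ε from by ring, ← hrp 1 (2*ε),
        Real.rpow_one]
    rw [show (nR:ℝ)*nR*(a/n) = (nR:ℝ)*nR*a/n from by ring, le_div_iff₀ hN0]
    calc a * (n:ℝ)^(2*ε) * (n:ℝ) = ((n:ℝ) * (n:ℝ)^(2*ε)) * a := by ring
      _ ≤ ((nR:ℝ)*nR) * a := mul_le_mul_of_nonneg_right (le_of_eq_of_le h2.symm h1) ha.le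
      _ = (nR:ℝ)*nR*a := by ring
  have hm2lb : b/2 * (n:ℝ)^((1:ℝ)/2+ε) ≤ m2 := by
    rw [hm2]
    have h1 : (n:ℝ)^((1:ℝ)/2+ε) * ((n:ℝ)/2) ≤ (nR:ℝ)*nB :=
      mul_le_mul hnRlb hnB2 (by positivity) (by positivity)
    rw [show (nR:ℝ)*nB*(b/n) = (nR:ℝ)*nB*b/n from by ring, le_div_iff₀ hN0]
    calc b/2 * (n:ℝ)^((1:ℝ)/2+ε) * (n:ℝ) = ((n:ℝ)^((1:ℝ)/2+ε) * ((n:ℝ)/2)) * b := by ring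
      _ ≤ ((nR:ℝ)*nB) * b := mul_le_mul_of_nonneg_right h1 hb.le
      _ = (nR:ℝ)*nB*b := by ring
  have hm3lb : a * (n:ℝ)/4 ≤ m3 := by
    rw [hm3]
    have h1 : ((n:ℝ)/2) * ((n:ℝ)/2) ≤ (nB:ℝ)*nB :=
      mul_le_mul hnB2 hnB2 (by positivity) (by positivity)
    rw [show (nB:ℝ)*nB*(a/n) = (nB:ℝ)*nB*a/n from by ring, le_div_iff₀ hN0]
    calc a * (n:ℝ)/4 * (n:ℝ) = (((n:ℝ)/2) * ((n:ℝ)/2)) * a := by ring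
      _ ≤ ((nB:ℝ)*nB) * a := mul_le_mul_of_nonneg_right h1 ha.le
      _ = (nB:ℝ)*nB*a := by ring
  -- exponent comparisons
  have hA1 : C₁ * (n:ℝ)^ε ≤ δ^2 * m1 / 8 := by
    have q1 : (n:ℝ)^(-(ε/2)) * (n:ℝ)^(2*ε) = (n:ℝ)^ε * (n:ℝ)^(ε/2) := by
      rw [hrp, hrp]; congr 1; ring
    calc C₁ * (n:ℝ)^ε ≤ a/12 * (n:ℝ)^ε :=
        mul_le_mul_of_nonneg_right (min_le_left _ _) (hrpos ε).le
      _ ≤ a/128 * ((n:ℝ)^ε * 44) := by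
          have hx := mul_le_mul_of_nonneg_right
            (by norm_num : (1:ℝ)/12 ≤ 44/128) (mul_nonneg ha.le (hrpos ε).le)
          calc a/12 * (n:ℝ)^ε = 1/12 * (a*(n:ℝ)^ε) := by ring
            _ ≤ 44/128 * (a*(n:ℝ)^ε) := hx
            _ = a/128 * ((n:ℝ)^ε * 44) := by ring
      _ ≤ a/128 * ((n:ℝ)^ε * (n:ℝ)^(ε/2)) :=
          mul_le_mul_of_nonneg_left
            (mul_le_mul_of_nonneg_left h44a (hrpos ε).le) (by positivity)
      _ = δ^2 * (a * (n:ℝ)^(2*ε)) / 8 := by rw [hδ2, ← q1]; ring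
      _ ≤ δ^2 * m1 / 8 := by linarith only [mul_le_mul_of_nonneg_left hm1lb (sq_nonneg δ)]
  have hA2 : C₁ * (n:ℝ)^ε ≤ δ^2 * m2 / 8 := by
    have q2 : (n:ℝ)^(-(ε/2)) * (n:ℝ)^((1:ℝ)/2+ε) = (n:ℝ)^ε * (n:ℝ)^((1:ℝ)/2 - ε/2) := by
      rw [hrp, hrp]; congr 1; ring
    calc C₁ * (n:ℝ)^ε ≤ b/6 * (n:ℝ)^ε :=
        mul_le_mul_of_nonneg_right (min_le_right _ _) (hrpos ε).le
      _ ≤ b/256 * ((n:ℝ)^ε * 44) := by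
          have hx := mul_le_mul_of_nonneg_right
            (by norm_num : (1:ℝ)/6 ≤ 44/256) (mul_nonneg hb.le (hrpos ε).le)
          calc b/6 * (n:ℝ)^ε = 1/6 * (b*(n:ℝ)^ε) := by ring
            _ ≤ 44/256 * (b*(n:ℝ)^ε) := hx
            _ = b/256 * ((n:ℝ)^ε * 44) := by ring
      _ ≤ b/256 * ((n:ℝ)^ε * (n:ℝ)^((1:ℝ)/2 - ε/2)) :=
          mul_le_mul_of_nonneg_left
            (mul_le_mul_of_nonneg_left h44c (hrpos ε).le) (by positivity)
      _ = δ^2 * (b/2 * (n:ℝ)^((1:ℝ)/2+ε)) / 8 := by rw [hδ2, ← q2]; ring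
      _ ≤ δ^2 * m2 / 8 := by linarith only [mul_le_mul_of_nonneg_left hm2lb (sq_nonneg δ)]
  have hA3 : C₁ * (n:ℝ)^ε ≤ δ^2 * m3 / 8 := by
    have q3 : (n:ℝ)^(-(ε/2)) * (n:ℝ)^(1:ℝ) = (n:ℝ)^ε * (n:ℝ)^(1 - 3*ε/2) := by
      rw [hrp, hrp]; congr 1; ring
    rw [Real.rpow_one] at q3
    calc C₁ * (n:ℝ)^ε ≤ a/12 * (n:ℝ)^ε :=
        mul_le_mul_of_nonneg_right (min_le_left _ _) (hrpos ε).le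
      _ ≤ a/512 * ((n:ℝ)^ε * 44) := by
          have hx := mul_le_mul_of_nonneg_right
            (by norm_num : (1:ℝ)/12 ≤ 44/512) (mul_nonneg ha.le (hrpos ε).le)
          calc a/12 * (n:ℝ)^ε = 1/12 * (a*(n:ℝ)^ε) := by ring
            _ ≤ 44/512 * (a*(n:ℝ)^ε) := hx
            _ = a/512 * ((n:ℝ)^ε * 44) := by ring
      _ ≤ a/512 * ((n:ℝ)^ε * (n:ℝ)^(1 - 3*ε/2)) :=
          mul_le_mul_of_nonneg_left
            (mul_le_mul_of_nonneg_left h44b (hrpos ε).le) (by positivity)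
      _ = δ^2 * (a * (n:ℝ)/4) / 8 := by rw [hδ2, ← q3]; ring
      _ ≤ δ^2 * m3 / 8 := by linarith only [mul_le_mul_of_nonneg_left hm3lb (sq_nonneg δ)]
  -- bad events and Chernoff bounds
  set bad1 : Set Ω := {ω | δ * m1 ≤ |T1 ω - m1|} with hbad1def
  set bad2 : Set Ω := {ω | δ * m2 ≤ |T2 ω - m2|} with hbad2def
  set bad3 : Set Ω := {ω | δ * m3 ≤ |T3 ω - m3|} with hbad3def
  have hc2or : ∀ p : {p : Fin n × Fin n // p.1 ≤ p.2},
      (if p.val.1 = p.val.2 then (1:ℝ) else 2) = 1 ∨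
      (if p.val.1 = p.val.2 then (1:ℝ) else 2) = 2 := by
    intro p; by_cases h : p.val.1 = p.val.2
    · exact Or.inl (if_pos h)
    · exact Or.inr (if_neg h)
  have hb1 : (μ bad1).toReal ≤ 2 * Real.exp (-δ^2 * m1 / 8) :=
    chernoff (fun p => Y p.val.1 p.val.2) sRR hindep (fun p => hmeasY _ _)
      (fun p ω => h01Y _ _ ω)
      (fun p => if p.val.1 = p.val.2 then (1:ℝ) else 2) hc2or
      (fun p => if ((p.val.1:ℕ) < nR ↔ (p.val.2:ℕ) < nR) then a/(n:ℝ) else b/n)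
      hprnn hpr1 (fun p => hPY _ _) δ hδ0 hδ1
  have hb2 : (μ bad2).toReal ≤ 2 * Real.exp (-δ^2 * m2 / 8) :=
    chernoff (fun p => Y p.val.1 p.val.2) sRB hindep (fun p => hmeasY _ _)
      (fun p ω => h01Y _ _ ω)
      (fun _ => (1:ℝ)) (fun _ => Or.inl rfl)
      (fun p => if ((p.val.1:ℕ) < nR ↔ (p.val.2:ℕ) < nR) then a/(n:ℝ) else b/n)
      hprnn hpr1 (fun p => hPY _ _) δ hδ0 hδ1
  have hb3 : (μ bad3).toReal ≤ 2 * Real.exp (-δ^2 * m3 / 8) :=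
    chernoff (fun p => Y p.val.1 p.val.2) sBB hindep (fun p => hmeasY _ _)
      (fun p ω => h01Y _ _ ω)
      (fun p => if p.val.1 = p.val.2 then (1:ℝ) else 2) hc2or
      (fun p => if ((p.val.1:ℕ) < nR ↔ (p.val.2:ℕ) < nR) then a/(n:ℝ) else b/n)
      hprnn hpr1 (fun p => hPY _ _) δ hδ0 hδ1
  have hexp1 : (μ bad1).toReal ≤ 2 * Real.exp (-C₁ * (n:ℝ)^ε) :=
    hb1.trans (mul_le_mul_of_nonneg_left (Real.exp_le_exp.mpr (by linarith only [hA1])) (by norm_num))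
  have hexp2 : (μ bad2).toReal ≤ 2 * Real.exp (-C₁ * (n:ℝ)^ε) :=
    hb2.trans (mul_le_mul_of_nonneg_left (Real.exp_le_exp.mpr (by linarith only [hA2])) (by norm_num))
  have hexp3 : (μ bad3).toReal ≤ 2 * Real.exp (-C₁ * (n:ℝ)^ε) :=
    hb3.trans (mul_le_mul_of_nonneg_left (Real.exp_le_exp.mpr (by linarith only [hA3])) (by norm_num))
  -- measurability
  have hmeasT1 : Measurable T1 := by
    rw [hT1def]; exact Finset.measurable_sum _ (fun p _ => (hmeasY _ _).const_mul _)
  have hmeasT2 : Measurable T2 := by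
    rw [hT2def]; exact Finset.measurable_sum _ (fun p _ => (hmeasY _ _).const_mul _)
  have hmeasT3 : Measurable T3 := by
    rw [hT3def]; exact Finset.measurable_sum _ (fun p _ => (hmeasY _ _).const_mul _)
  have hmb1 : MeasurableSet bad1 := by
    rw [hbad1def]
    exact measurableSet_le measurable_const ((hmeasT1.sub measurable_const).abs)
  have hmb2 : MeasurableSet bad2 := by
    rw [hbad2def]
    exact measurableSet_le measurable_const ((hmeasT2.sub measurable_const).abs)
  have hmb3 : MeasurableSet bad3 := by
    rw [hbad3def]
    exact measurableSet_le measurable_const ((hmeasT3.sub measurable_const).abs)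
  -- deterministic implication on the good event
  rw [hER, hERB]
  have hMv0 : 0 < α * m1 + β * m2 := add_pos (mul_pos hα hm1pos) (mul_pos hβ hm2pos)
  have hQv0 : 0 < (α * m1 + β * m2) + (α * m3 + β * m2) :=
    add_pos (add_pos (mul_pos hα hm1pos) (mul_pos hβ hm2pos))
      (add_pos (mul_pos hα hm3pos) (mul_pos hβ hm2pos))
  have hη4 : η = 4 * δ := by rw [hδdef]; ring
  have hdet : ∀ ω, ω ∈ bad1ᶜ ∩ bad2ᶜ ∩ bad3ᶜ →
      (1 - η) * ((α * m1 + β * m2) / ((α * m1 + β * m2) + (α * m3 + β * m2)))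
        < R ω / (R ω + B ω) ∧
      R ω / (R ω + B ω)
        < (1 + η) * ((α * m1 + β * m2) / ((α * m1 + β * m2) + (α * m3 + β * m2))) := by
    intro ω hω
    obtain ⟨⟨h1, h2⟩, h3⟩ := hω
    have h1' : ¬ δ * m1 ≤ |T1 ω - m1| := h1
    have h2' : ¬ δ * m2 ≤ |T2 ω - m2| := h2
    have h3' : ¬ δ * m3 ≤ |T3 ω - m3| := h3
    have e1 := abs_lt.mp (lt_of_not_ge h1')
    have e2 := abs_lt.mp (lt_of_not_ge h2')
    have e3 := abs_lt.mp (lt_of_not_ge h3')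
    rw [hRω ω, hBω ω, hη4]
    have p1 := mul_lt_mul_of_pos_left e1.1 hα
    have p1' := mul_lt_mul_of_pos_left e1.2 hα
    have p2 := mul_lt_mul_of_pos_left e2.1 hβ
    have p2' := mul_lt_mul_of_pos_left e2.2 hβ
    have p3 := mul_lt_mul_of_pos_left e3.1 hα
    have p3' := mul_lt_mul_of_pos_left e3.2 hα
    set r : ℝ := α * T1 ω + β * T2 ω with hrdef
    set q : ℝ := (α * T1 ω + β * T2 ω) + (α * T3 ω + β * T2 ω) with hqdef
    set Mv : ℝ := α * m1 + β * m2 with hMvdef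
    set Qv : ℝ := (α * m1 + β * m2) + (α * m3 + β * m2) with hQvdef
    clear_value r q Mv Qv
    have hr1 : (1-δ) * Mv < r := by
      rw [hrdef, hMvdef]; linarith only [p1, p2]
    have hr2 : r < (1+δ) * Mv := by
      rw [hrdef, hMvdef]; linarith only [p1', p2']
    have hq1 : (1-δ) * Qv < q := by
      rw [hqdef, hQvdef]; linarith only [p1, p2, p3]
    have hq2 : q < (1+δ) * Qv := by
      rw [hqdef, hQvdef]; linarith only [p1', p2', p3']
    have hdq : δ * Qv ≤ 1/4 * Qv := mul_le_mul_of_nonneg_right hδq hQv0.le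
    have hq0 : 0 < q := by linarith only [hq1, hQv0, hdq]
    have x1 : 0 < δ * Mv * Qv := mul_pos (mul_pos hδ0 hMv0) hQv0
    have x2 : 0 ≤ δ * δ * (Mv * Qv) :=
      mul_nonneg (mul_nonneg hδ0.le hδ0.le) (mul_pos hMv0 hQv0).le
    have x3 : δ * (δ * Mv * Qv) ≤ 1/4 * (δ * Mv * Qv) :=
      mul_le_mul_of_nonneg_right hδq x1.le
    constructor
    · rw [← mul_div_assoc, div_lt_div_iff₀ hQv0 hq0]
      have w1 := mul_lt_mul_of_pos_right hr1 hQv0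
      have w2 := mul_le_mul_of_nonneg_left hq2.le
        (mul_nonneg (by linarith only [hδq] : (0:ℝ) ≤ 1 - 4*δ) hMv0.le)
      linarith only [w1, w2, x1, x2]
    · rw [← mul_div_assoc, div_lt_div_iff₀ hq0 hQv0]
      have w3 := mul_lt_mul_of_pos_right hr2 hQv0
      have w4 := mul_lt_mul_of_pos_left hq1
        (mul_pos (by linarith only [hδ0] : (0:ℝ) < 1 + 4*δ) hMv0)
      linarith only [w3, w4, x1, x3]
  -- measure of the good event
  have hgm : MeasurableSet (bad1ᶜ ∩ bad2ᶜ ∩ bad3ᶜ) :=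
    (hmb1.compl.inter hmb2.compl).inter hmb3.compl
  have hcompl : (bad1ᶜ ∩ bad2ᶜ ∩ bad3ᶜ)ᶜ = bad1 ∪ bad2 ∪ bad3 := by
    simp [Set.compl_inter, compl_compl]
  have hu : (μ ((bad1ᶜ ∩ bad2ᶜ ∩ bad3ᶜ)ᶜ)).toReal ≤ 6 * Real.exp (-C₁ * (n:ℝ)^ε) := by
    rw [hcompl]
    have hle : μ (bad1 ∪ bad2 ∪ bad3) ≤ μ bad1 + μ bad2 + μ bad3 :=
      le_trans (measure_union_le _ _) (add_le_add_left (measure_union_le _ _) _)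
    have h6 : (μ (bad1 ∪ bad2 ∪ bad3)).toReal
        ≤ (μ bad1).toReal + (μ bad2).toReal + (μ bad3).toReal := by
      refine le_trans (ENNReal.toReal_mono ?_ hle) (le_of_eq ?_)
      · finiteness
      · rw [ENNReal.toReal_add (by finiteness) (by finiteness),
          ENNReal.toReal_add (by finiteness) (by finiteness)]
    linarith only [h6, hexp1, hexp2, hexp3]
  have hcr : (μ ((bad1ᶜ ∩ bad2ᶜ ∩ bad3ᶜ)ᶜ)).toReal
      = 1 - (μ (bad1ᶜ ∩ bad2ᶜ ∩ bad3ᶜ)).toReal := by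
    rw [measure_compl hgm (measure_ne_top μ _), measure_univ,
      ENNReal.toReal_sub_of_le prob_le_one ENNReal.one_ne_top]
    simp
  have hgood : ENNReal.ofReal (1 - 8 * Real.exp (-C₁ * (n:ℝ)^ε))
      ≤ μ (bad1ᶜ ∩ bad2ᶜ ∩ bad3ᶜ) := by
    have hE : 0 < Real.exp (-C₁ * (n:ℝ)^ε) := Real.exp_pos _
    calc ENNReal.ofReal (1 - 8 * Real.exp (-C₁ * (n:ℝ)^ε))
        ≤ ENNReal.ofReal ((μ (bad1ᶜ ∩ bad2ᶜ ∩ bad3ᶜ)).toReal) :=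
          ENNReal.ofReal_le_ofReal (by linarith only [hu, hcr, hE])
      _ = μ (bad1ᶜ ∩ bad2ᶜ ∩ bad3ᶜ) := ENNReal.ofReal_toReal (measure_ne_top _ _)
  exact le_trans hgood (measure_mono (fun ω hω => hdet ω hω))
end
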